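/- Let R = GR(4, 4^r), ξ of multiplicative order 2^r − 1, and G₁ = ⟨ξ⟩. Then for every unit γ ∈ R^*, the cosets γG₁, −γG₁, (1−ξ)γG₁, (1−ξ²)γG₁, …, (1−ξ^{2^r−2})γG₁ partition the unit group R^*, and moreover R \ R^* = 2γG₁ ∪ {0}. -/

import Mathlib

open Pointwise

set_option linter.unusedSectionVars false
namespace S19

variable {R : Type} [CommRing R] [Fintype R] [CharP R 4]

lemma four0 : (4:R) = 0 := by
  have h := CharP.cast_eq_zero R 4
  exact_mod_cast h

lemma two_ne : (2:R) ≠ 0 := by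
  intro h
  have h2 : ((2:ℕ):R) = 0 := by exact_mod_cast h
  have := (CharP.cast_eq_zero_iff R 4 2).mp h2
  omega

lemma ann (hlocal : ∀ x : R, ¬ IsUnit x ↔ x ∈ Ideal.span {(2 : R)}) (z : R) :
    2 * z = 0 ↔ ¬ IsUnit z := by
  constructor
  · intro h hz
    rcases hz with ⟨u, rfl⟩
    apply two_ne (R := R)
    calc (2:R) = 2 * ↑u * ↑u⁻¹ := by rw [mul_assoc, Units.mul_inv, mul_one]
    _ = 0 := by rw [h, zero_mul]
  · intro h
    rcases Ideal.mem_span_singleton.mp ((hlocal z).mp h) with ⟨c, rfl⟩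
    calc 2*(2*c) = 4 * c := by ring
    _ = 0 := by rw [four0, zero_mul]

lemma sq1 (b : R) : (1 + 2*b)^2 = 1 := by
  linear_combination (b + b^2 : R) * (four0 (R := R))

lemma odd_pow (b : R) (m : ℕ) : (1 + 2*b)^(2*m+1) = 1 + 2*b := by
  rw [pow_succ, pow_mul, sq1, one_pow, one_mul]

lemma even_pow (b : R) (m : ℕ) : (1 + 2*b)^(2*m) = 1 := by
  rw [pow_mul, sq1, one_pow]

lemma frob (x : R) : ∀ k : ℕ, (1 - x)^(2^(k+1)) = (1 + x^(2^k))^2 := by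
  intro k
  induction k with
  | zero => simpa using by linear_combination (-x : R) * (four0 (R := R))
  | succ k ih =>
    have h1 : (2:ℕ)^(k+2) = 2^(k+1) * 2 := by ring
    have h2 : (2:ℕ)^(k+1) = 2^k * 2 := by ring
    rw [h1, pow_mul, ih, h2, pow_mul]
    set u := x^(2^k)
    linear_combination (u + u^2 + u^3 : R) * (four0 (R := R))


lemma pow_eq_iff {ξ : R} (hu : IsUnit ξ) {a b : ℕ} :
    ξ ^ a = ξ ^ b ↔ a ≡ b [MOD orderOf ξ] := by
  rcases hu with ⟨u, rfl⟩
  rw [← Units.val_pow_eq_pow_val, ← Units.val_pow_eq_pow_val]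
  rw [show ((u^a : Rˣ) : R) = ((u^b : Rˣ) : R) ↔ u^a = u^b from ⟨fun h => Units.ext h, fun h => congrArg _ h⟩]
  rw [pow_eq_pow_iff_modEq, orderOf_units]

lemma n_pos (r : ℕ) (hr : 1 ≤ r) : 1 ≤ 2^r - 1 := by
  have h2 : 2 ≤ 2^r := by calc 2 = 2^1 := rfl
                               _ ≤ 2^r := Nat.pow_le_pow_right (by norm_num) hr
  omega

lemma n_odd (r : ℕ) (hr : 1 ≤ r) : Odd (2^r - 1) := by
  have h2 : 2 ≤ 2^r := by calc 2 = 2^1 := rfl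
                               _ ≤ 2^r := Nat.pow_le_pow_right (by norm_num) hr
  have heven : Even (2^r) := (Nat.even_pow).mpr ⟨even_two, by omega⟩
  exact Nat.Even.sub_odd (by omega) heven odd_one

lemma xi_unit (r : ℕ) (hr : 1 ≤ r) (ξ : R) (hξ : orderOf ξ = 2 ^ r - 1) : IsUnit ξ := by
  have hn := n_pos r hr
  refine IsUnit.of_mul_eq_one (ξ^(2^r - 1 - 1)) ?_
  rw [← pow_succ']
  have : 2^r - 1 - 1 + 1 = 2^r - 1 := by omega
  rw [this, ← hξ, pow_orderOf_eq_one]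

lemma xi_pow_n (r : ℕ) (ξ : R) (hξ : orderOf ξ = 2 ^ r - 1) : ξ ^ (2^r - 1) = 1 := by
  rw [← hξ, pow_orderOf_eq_one]

lemma lu (r : ℕ) (hr : 1 ≤ r) (ξ : R) (hξ : orderOf ξ = 2 ^ r - 1)
    {a b : ℕ} {c : R} (h : ξ^a = ξ^b * (1+2*c)) :
    a ≡ b [MOD 2^r - 1] ∧ 2*c = 0 := by
  have hu := xi_unit r hr ξ hξ
  have hsq : ξ^(a*2) = ξ^(b*2) := by
    have h2 := congrArg (fun z : R => z^2) h
    simp only [mul_pow, sq1, mul_one] at h2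
    rw [pow_mul, pow_mul]
    exact h2
  have hmod : a*2 ≡ b*2 [MOD 2^r - 1] := by rw [← hξ]; exact (pow_eq_iff hu).mp hsq
  have hodd := n_odd r hr
  have hcop : Nat.Coprime (2^r-1) 2 := by
    rw [Nat.coprime_two_right]; exact hodd
  have hab : a ≡ b [MOD 2^r - 1] := Nat.ModEq.cancel_right_of_coprime hcop hmod
  refine ⟨hab, ?_⟩
  have he : ξ^a = ξ^b := by rw [← hξ] at hab; exact (pow_eq_iff hu).mpr hab
  have h3 := (hu.pow b).mul_left_cancel (by rw [← h, he, mul_one] : ξ^b * (1+2*c) = ξ^b * 1)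
  linear_combination h3

lemma exists_rep (r : ℕ) (hr : 1 ≤ r)
    (hcard : Fintype.card R = 4 ^ r)
    (hlocal : ∀ x : R, ¬ IsUnit x ↔ x ∈ Ideal.span {(2 : R)})
    (ξ : R) (hξ : orderOf ξ = 2 ^ r - 1) :
    ∀ x : R, IsUnit x → ∃ (j : ℕ) (b : R), x = ξ ^ j * (1 + 2*b) := by
  classical
  have hu := xi_unit r hr ξ hξ
  set n := 2^r - 1 with hn
  set f : R →+ R := AddMonoidHom.mulLeft (2:R) with hf
  have hfapp : ∀ z : R, f z = 2 * z := fun z => rfl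
  have hker : ∀ z : R, z ∈ f.ker ↔ ¬ IsUnit z := by
    intro z; rw [AddMonoidHom.mem_ker, hfapp]; exact ann hlocal z
  have hrange : ∀ z : R, z ∈ f.range ↔ ¬ IsUnit z := by
    intro z
    rw [hlocal z, Ideal.mem_span_singleton]
    constructor
    · rintro ⟨y, rfl⟩; exact ⟨y, (hfapp y).symm⟩
    · rintro ⟨c, rfl⟩; exact ⟨c, hfapp c⟩
  have hsets : (f.ker : Set R) = (f.range : Set R) := by
    ext z
    simp only [SetLike.mem_coe, hker z, hrange z]
  have hkr : Nat.card f.ker = Nat.card f.range := Nat.card_congr (Equiv.setCongr hsets)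
  have hcardk : Nat.card f.ker = 2^r := by
    have h1 := AddSubgroup.card_eq_card_quotient_mul_card_addSubgroup f.ker
    have h2 : Nat.card (R ⧸ f.ker) = Nat.card f.range :=
      Nat.card_congr (QuotientAddGroup.quotientKerEquivRange f).toEquiv
    have h3 : Nat.card R = 4^r := by rw [Nat.card_eq_fintype_card, hcard]
    have h4 : (4:ℕ)^r = 2^r * 2^r := by
      rw [show (4:ℕ) = 2*2 from rfl, mul_pow]
    have h5 : Nat.card f.ker * Nat.card f.ker = 2^r * 2^r := by
      rw [← h4, ← h3, h1, h2, ← hkr, mul_comm]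
    exact Nat.mul_self_inj.mp h5
  -- unit of 1 + s for s nonunit
  have hone : ∀ s : R, ¬ IsUnit s → IsUnit (1 + s) := by
    intro s hs
    rcases Ideal.mem_span_singleton.mp ((hlocal s).mp hs) with ⟨c, rfl⟩
    exact IsUnit.of_mul_eq_one (1+2*c) (by rw [← sq]; exact sq1 c)
  -- the counting bijection
  set g : Fin n × ↥f.ker → {z : R // IsUnit z} :=
    fun p => ⟨ξ^(p.1 : ℕ) * (1 + (p.2 : R)),
      (hu.pow _).mul (hone _ ((hker _).mp p.2.2))⟩ with hg
  have hginj : Function.Injective g := by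
    rintro ⟨j, s⟩ ⟨j', s'⟩ hgeq
    have e : ξ^(j:ℕ) * (1 + (s:R)) = ξ^(j':ℕ) * (1 + (s':R)) := congrArg Subtype.val hgeq
    rcases Ideal.mem_span_singleton.mp ((hlocal _).mp ((hker _).mp s.2)) with ⟨y, hy⟩
    rcases Ideal.mem_span_singleton.mp ((hlocal _).mp ((hker _).mp s'.2)) with ⟨y', hy'⟩
    have e2 : ξ^((j:ℕ)*2) = ξ^((j':ℕ)*2) := by
      have h2 := congrArg (fun z : R => z^2) e
      simp only [mul_pow, hy, hy', sq1, mul_one] at h2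
      rw [pow_mul, pow_mul]
      exact h2
    have hmod : (j:ℕ)*2 ≡ (j':ℕ)*2 [MOD n] := by
      have := (pow_eq_iff hu).mp e2; rwa [hξ] at this
    have hcop : Nat.Coprime n 2 := by
      rw [Nat.coprime_two_right]; exact n_odd r hr
    have hjj : (j:ℕ) ≡ (j':ℕ) [MOD n] := Nat.ModEq.cancel_right_of_coprime hcop hmod
    have hj : j = j' := by
      apply Fin.ext
      have := j.2; have := j'.2
      unfold Nat.ModEq at hjj
      rwa [Nat.mod_eq_of_lt j.2, Nat.mod_eq_of_lt j'.2] at hjj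
    subst hj
    have := (hu.pow (j:ℕ)).mul_left_cancel e
    have hss : (s:R) = (s':R) := by linear_combination this
    exact Prod.ext rfl (Subtype.ext hss)
  have hcards : Fintype.card (Fin n × ↥f.ker) = Fintype.card {z : R // IsUnit z} := by
    have hk : Fintype.card ↥f.ker = 2^r := by rw [← Nat.card_eq_fintype_card, hcardk]
    have hnon : Fintype.card {z : R // ¬ IsUnit z} = 2^r := by
      rw [← hk]
      exact Fintype.card_congr (Equiv.subtypeEquivRight (fun z => (hker z).symm))
    have h4 : (4:ℕ)^r = 2^r * 2^r := by rw [show (4:ℕ) = 2*2 from rfl, mul_pow]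
    rw [Fintype.card_prod, Fintype.card_fin, hk]
    have hcompl : Fintype.card {z : R // ¬ IsUnit z}
        = Fintype.card R - Fintype.card {z : R // IsUnit z} :=
      Fintype.card_subtype_compl _
    have hle : Fintype.card {z : R // IsUnit z} ≤ Fintype.card R := Fintype.card_subtype_le _
    rw [hnon, hcard, h4] at hcompl
    rw [hcard, h4] at hle
    have hmul : n * 2^r = 2^r * 2^r - 2^r := by rw [hn, Nat.sub_mul, one_mul]
    have h2 : 2 ≤ 2^r := by calc 2 = 2^1 := rfl
                                 _ ≤ 2^r := Nat.pow_le_pow_right (by norm_num) hr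
    omega
  have hgsurj : Function.Surjective g :=
    ((Fintype.bijective_iff_injective_and_card g).mpr ⟨hginj, hcards⟩).2
  intro x hx
  obtain ⟨⟨j, s⟩, hjs⟩ := hgsurj ⟨x, hx⟩
  have e : ξ^(j:ℕ) * (1 + (s:R)) = x := congrArg Subtype.val hjs
  rcases Ideal.mem_span_singleton.mp ((hlocal _).mp ((hker _).mp s.2)) with ⟨y, hy⟩
  exact ⟨j, y, by rw [← e, hy]⟩

lemma two_r_split (r : ℕ) (hr : 1 ≤ r) : (2:ℕ)^r = 2^(r-1) * 2 := by
  rw [← pow_succ]; congr 1; omega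

lemma key_eq (r : ℕ) (hr : 1 ≤ r) (ξ : R) (t : ℕ) :
    (1 - ξ^t)^(2^r) = (1 + ξ^(t*2^(r-1)))^2 := by
  have hfr := frob (ξ^t) (r-1)
  rw [show r-1+1 = r by omega] at hfr
  rw [hfr, ← pow_mul]

lemma u_sq (r : ℕ) (hr : 1 ≤ r) (ξ : R) (hξ : orderOf ξ = 2 ^ r - 1) (t : ℕ) :
    ξ^(t*2^(r-1)) * ξ^(t*2^(r-1)) = ξ^t := by
  have hu := xi_unit r hr ξ hξ
  rw [← pow_add]
  apply (pow_eq_iff hu).mpr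
  rw [hξ]
  have he : t*2^(r-1) + t*2^(r-1) = t*(2^r) := by
    rw [two_r_split r hr]; ring
  rw [he]
  obtain ⟨m, hm⟩ : ∃ m, 2^r = m+1 := ⟨2^r-1, by have := n_pos r hr; omega⟩
  have hm' : 2^r - 1 = m := by omega
  rw [hm', hm]
  have h0 : t*(m+1) = t*m + t := by ring
  rw [h0]
  simpa using (Nat.modEq_zero_iff_dvd.mpr ⟨t, mul_comm t m⟩).add_right t

lemma coph (r : ℕ) (hr : 1 ≤ r) : Nat.Coprime (2^r-1) (2^(r-1)) :=
  Nat.Coprime.pow_right _ ((Nat.coprime_two_right).mpr (n_odd r hr))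

lemma nondvd (r : ℕ) (hr : 1 ≤ r) {t : ℕ} (ht1 : 1 ≤ t) (ht2 : t ≤ 2^r - 2) :
    ¬ (2^r-1) ∣ (t * 2^(r-1)) := by
  intro hdvd
  have := (Nat.Coprime.dvd_of_dvd_mul_right (coph r hr) hdvd)
  have := Nat.le_of_dvd (by omega) this
  have := n_pos r hr
  omega

lemma unit_one_sub (r : ℕ) (hr : 1 ≤ r)
    (hlocal : ∀ x : R, ¬ IsUnit x ↔ x ∈ Ideal.span {(2 : R)})
    (ξ : R) (hξ : orderOf ξ = 2 ^ r - 1) {t : ℕ} (ht : ¬ (2^r - 1) ∣ t) :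
    IsUnit (1 - ξ^t) := by
  by_contra h
  rcases Ideal.mem_span_singleton.mp ((hlocal _).mp h) with ⟨c, hc⟩
  have he : ξ^t = ξ^0 * (1+2*(-c)) := by rw [pow_zero, one_mul]; linear_combination -hc
  have := (lu r hr ξ hξ he).1
  exact ht (by simpa using (Nat.modEq_zero_iff_dvd).mp this)

lemma unit_one_add (r : ℕ) (hr : 1 ≤ r)
    (hlocal : ∀ x : R, ¬ IsUnit x ↔ x ∈ Ideal.span {(2 : R)})
    (ξ : R) (hξ : orderOf ξ = 2 ^ r - 1) {t : ℕ} (ht : ¬ (2^r - 1) ∣ t) :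
    IsUnit (1 + ξ^t) := by
  by_contra h
  rcases Ideal.mem_span_singleton.mp ((hlocal _).mp h) with ⟨c, hc⟩
  have he : ξ^t = ξ^0 * (1+2*(c-1)) := by rw [pow_zero, one_mul]; linear_combination hc
  have := (lu r hr ξ hξ he).1
  exact ht (by simpa using (Nat.modEq_zero_iff_dvd).mp this)

lemma psi_ne_one (r : ℕ) (hr : 1 ≤ r)
    (hlocal : ∀ x : R, ¬ IsUnit x ↔ x ∈ Ideal.span {(2 : R)})
    (ξ : R) (hξ : orderOf ξ = 2 ^ r - 1) {t : ℕ} (ht1 : 1 ≤ t) (ht2 : t ≤ 2^r - 2) :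
    (1 - ξ^t)^(2^r - 1) ≠ 1 := by
  intro hE
  have hq : (1 - ξ^t)^(2^r) = 1 - ξ^t := by
    have : (2:ℕ)^r = (2^r - 1) + 1 := by have := n_pos r hr; omega
    rw [this, pow_succ, hE, one_mul]
  set u := ξ^(t*2^(r-1)) with hudef
  have husq : u * u = ξ^t := u_sq r hr ξ hξ t
  have hk := key_eq r hr ξ t
  have huu : IsUnit (1 + u) := unit_one_add r hr hlocal ξ hξ (nondvd r hr ht1 ht2)
  have hcancel : (1+u) * (1+u) = (1+u) * (1-u) := by
    rw [← sq]
    rw [← hk, hq]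
    linear_combination husq
  have h2u : 2*u = 0 := by linear_combination huu.mul_left_cancel hcancel
  have hnu : ¬ IsUnit u := ((ann hlocal u)).mp h2u
  exact hnu ((xi_unit r hr ξ hξ).pow _)

lemma psi_ne_negone (r : ℕ) (hr : 1 ≤ r)
    (hlocal : ∀ x : R, ¬ IsUnit x ↔ x ∈ Ideal.span {(2 : R)})
    (ξ : R) (hξ : orderOf ξ = 2 ^ r - 1) {t : ℕ} (ht1 : 1 ≤ t) (ht2 : t ≤ 2^r - 2) :
    (1 - ξ^t)^(2^r - 1) ≠ -1 := by
  intro hE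
  have hq : (1 - ξ^t)^(2^r) = -(1 - ξ^t) := by
    have : (2:ℕ)^r = (2^r - 1) + 1 := by have := n_pos r hr; omega
    rw [this, pow_succ, hE]; ring
  set u := ξ^(t*2^(r-1)) with hudef
  have husq : u * u = ξ^t := u_sq r hr ξ hξ t
  have hk := key_eq r hr ξ t
  have huu : IsUnit (1 + u) := unit_one_add r hr hlocal ξ hξ (nondvd r hr ht1 ht2)
  have hcancel : (1+u) * (1+u) = (1+u) * (u-1) := by
    rw [← sq, ← hk, hq]
    linear_combination -husq
  have h2 : (2:R) = 0 := by linear_combination huu.mul_left_cancel hcancel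
  exact two_ne h2

lemma psi_inj (r : ℕ) (hr : 1 ≤ r)
    (hlocal : ∀ x : R, ¬ IsUnit x ↔ x ∈ Ideal.span {(2 : R)})
    (ξ : R) (hξ : orderOf ξ = 2 ^ r - 1) {s t : ℕ}
    (hs1 : 1 ≤ s) (hs2 : s ≤ 2^r - 2) (ht1 : 1 ≤ t) (ht2 : t ≤ 2^r - 2)
    (hE : (1 - ξ^s)^(2^r - 1) = (1 - ξ^t)^(2^r - 1)) : s = t := by
  have hu := xi_unit r hr ξ hξ
  have hnsplit : (2:ℕ)^r = (2^r - 1) + 1 := by have := n_pos r hr; omega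
  set u := ξ^(s*2^(r-1)) with hudef
  set v := ξ^(t*2^(r-1)) with hvdef
  have husq : u * u = ξ^s := u_sq r hr ξ hξ s
  have hvsq : v * v = ξ^t := u_sq r hr ξ hξ t
  have hku := key_eq r hr ξ s
  have hkv := key_eq r hr ξ t
  have huu : IsUnit (1 + u) := unit_one_add r hr hlocal ξ hξ (nondvd r hr hs1 hs2)
  have hvv : IsUnit (1 + v) := unit_one_add r hr hlocal ξ hξ (nondvd r hr ht1 ht2)
  -- (1+u)^2 (1-y) = (1+v)^2 (1-x)
  have hmain : (1+u)^2 * (1 - ξ^t) = (1+v)^2 * (1 - ξ^s) := by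
    rw [← hku, ← hkv, hnsplit, pow_succ, pow_succ, hE]; ring
  have hE2 : ((1+u)*(1+v)) * ((1+u)*(1-v)) = ((1+u)*(1+v)) * ((1+v)*(1-u)) := by
    linear_combination hmain - (1+u)^2 * hvsq + (1+v)^2 * husq
  have he3 := (huu.mul hvv).mul_left_cancel hE2
  have h2uv : 2*(u - v) = 0 := by linear_combination he3
  have hnu : ¬ IsUnit (u - v) := (ann hlocal _).mp h2uv
  rcases Ideal.mem_span_singleton.mp ((hlocal _).mp hnu) with ⟨e, he⟩
  -- u = v * (1 + 2 * (e * inv))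
  have hinv : ξ^(t*2^(r-1)) * ξ^(t*2^(r-1)*(2^r-1-1)) = 1 := by
    rw [← pow_add]
    have h5 : t*2^(r-1) + t*2^(r-1)*(2^r-1-1) = (2^r-1)*(t*2^(r-1)) := by
      obtain ⟨m, hm⟩ : ∃ m, 2^r - 1 = m+1 := ⟨2^r-1-1, by have := n_pos r hr; omega⟩
      rw [hm, Nat.add_sub_cancel]; ring
    rw [h5, pow_mul, xi_pow_n r ξ hξ, one_pow]
  have heq : ξ^(s*2^(r-1)) = ξ^(t*2^(r-1)) * (1 + 2*(e * ξ^(t*2^(r-1)*(2^r-1-1)))) := by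
    rw [← hudef, ← hvdef]
    have : v * (1 + 2*(e * ξ^(t*2^(r-1)*(2^r-1-1)))) = v + 2*e*(v * ξ^(t*2^(r-1)*(2^r-1-1))) := by ring
    rw [this, hvdef, hinv, ← hvdef]
    linear_combination he
  have hmod := (lu r hr ξ hξ heq).1
  have hst : s ≡ t [MOD 2^r-1] :=
    Nat.ModEq.cancel_right_of_coprime (coph r hr) hmod
  have hn := n_pos r hr
  unfold Nat.ModEq at hst
  rwa [Nat.mod_eq_of_lt (by omega), Nat.mod_eq_of_lt (by omega)] at hst

lemma cover (r : ℕ) (hr : 1 ≤ r) (hcard : Fintype.card R = 4 ^ r)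
    (hlocal : ∀ x : R, ¬ IsUnit x ↔ x ∈ Ideal.span {(2 : R)})
    (ξ : R) (hξ : orderOf ξ = 2 ^ r - 1) :
    ∀ z : R, IsUnit z → ∃ t, t < 2^r ∧ ∃ k : ℕ,
      z = (if t = 0 then 1 else if t = 1 then -1 else (1 - ξ^(t-1))) * ξ^k := by
  intro z hz
  have hu := xi_unit r hr ξ hξ
  have hn := n_pos r hr
  have h2r : 2 ≤ 2^r := by calc 2 = 2^1 := rfl
                                _ ≤ 2^r := Nat.pow_le_pow_right (by norm_num) hr
  obtain ⟨j, b, hzrep⟩ := exists_rep r hr hcard hlocal ξ hξ z hz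
  by_cases hb0 : 2*b = 0
  · refine ⟨0, by omega, j, ?_⟩
    have h1 : (1 + 2*b : R) = 1 := by linear_combination hb0
    norm_num
    rw [hzrep, h1, mul_one]
  by_cases hb1 : 2*(b-1) = 0
  · refine ⟨1, by omega, j, ?_⟩
    norm_num
    rw [hzrep]
    have : (1 + 2*b : R) = -1 := by linear_combination hb1 + (four0 (R := R))
    rw [this]; ring
  · -- main case
    have hbu : IsUnit b := by
      by_contra hx; exact hb0 ((ann hlocal b).mpr hx)
    have hb1u : IsUnit (1+b) := by
      by_contra hx
      have h20 := (ann hlocal (1+b)).mpr hx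
      exact hb1 (by linear_combination h20 - (four0 (R := R)))
    obtain ⟨c, hc⟩ := hb1u.exists_right_inv
    have hcu : IsUnit c := IsUnit.of_mul_eq_one (1+b) (by rw [mul_comm]; exact hc)
    set w := b * c with hwdef
    have hwb : w * (1+b) = b := by
      calc w * (1+b) = b * ((1+b)*c) := by ring
      _ = b := by rw [hc, mul_one]
    obtain ⟨m, e, hwrep⟩ := exists_rep r hr hcard hlocal ξ hξ w (hbu.mul hcu)
    -- ¬ n ∣ m
    have hm' : ¬ (2^r - 1) ∣ m := by
      intro hdvd
      obtain ⟨kk, hkk⟩ := hdvd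
      have hxm : ξ^m = 1 := by rw [hkk, pow_mul, xi_pow_n r ξ hξ, one_pow]
      have h2w : 2*w = 2 := by
        rw [hwrep, hxm, one_mul]; linear_combination e * (four0 (R := R))
      have : (2:R) = 0 := by linear_combination 2*hwb - (1+b)*h2w
      exact two_ne this
    have hn2 : 2 ≤ 2^r - 1 := by
      by_contra hcon
      apply hm'
      have h1 : 2^r - 1 = 1 := by omega
      rw [h1]
      exact one_dvd m
    obtain ⟨h', -, hh'⟩ := Nat.exists_mul_mod_eq_one_of_coprime (coph r hr).symm (by omega)
    set t := (m * h') % (2^r - 1) with htdef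
    have ht_lt : t < 2^r - 1 := Nat.mod_lt _ (by omega)
    have hth : t * 2^(r-1) ≡ m [MOD 2^r - 1] := by
      calc t * 2^(r-1) ≡ (m * h') * 2^(r-1) [MOD 2^r - 1] :=
            Nat.ModEq.mul_right _ (Nat.mod_modEq _ _)
      _ = m * (2^(r-1) * h') := by ring
      _ ≡ m * 1 [MOD 2^r - 1] := Nat.ModEq.mul_left m (by
            calc 2^(r-1) * h' ≡ 2^(r-1) * h' % (2^r-1) [MOD 2^r - 1] := (Nat.mod_modEq _ _).symm
            _ = 1 := hh')
      _ = m := by rw [mul_one]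
    have ht0 : t ≠ 0 := by
      intro h0
      apply hm'
      have : (0:ℕ) ≡ m [MOD 2^r - 1] := by rw [← h0]; simpa [h0] using hth
      exact (Nat.modEq_zero_iff_dvd).mp this.symm
    -- now the coset
    have ht1 : 1 ≤ t := by omega
    have ht2 : t ≤ 2^r - 2 := by omega
    have hux : ξ^(t*2^(r-1)) = ξ^m := by
      apply (pow_eq_iff hu).mpr; rw [hξ]; exact hth
    set u := ξ^(t*2^(r-1)) with hudef
    have husq : u * u = ξ^t := u_sq r hr ξ hξ t
    have hk := key_eq r hr ξ t
    have huu : IsUnit (1 + u) := unit_one_add r hr hlocal ξ hξ (nondvd r hr ht1 ht2)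
    have hxu : IsUnit (1 - ξ^t) := by
      apply unit_one_sub r hr hlocal ξ hξ
      intro hdvd
      have := Nat.le_of_dvd (by omega) hdvd
      omega
    obtain ⟨j₀, b₀, hrep⟩ := exists_rep r hr hcard hlocal ξ hξ (1 - ξ^t) hxu
    -- (1+u)^2 = ξ^j₀
    have hA : (1+u)^2 = ξ^(j₀) := by
      have h1 : (1 - ξ^t)^(2^r) = ξ^(j₀*2^r) * ((1+2*b₀)^2)^(2^(r-1)) := by
        rw [hrep, mul_pow, ← pow_mul, ← pow_mul, two_r_split r hr]
        ring_nf
      rw [sq1, one_pow, mul_one] at h1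
      have h2 : ξ^(j₀*2^r) = ξ^(j₀) := by
        apply (pow_eq_iff hu).mpr; rw [hξ]
        obtain ⟨mm, hmm⟩ : ∃ mm, 2^r = mm+1 := ⟨2^r-1, by omega⟩
        have hmm' : 2^r - 1 = mm := by omega
        rw [hmm', hmm]
        have h0 : j₀*(mm+1) = j₀*mm + j₀ := by ring
        rw [h0]
        simpa using (Nat.modEq_zero_iff_dvd.mpr ⟨j₀, mul_comm j₀ mm⟩).add_right j₀
      rw [← hk, h1, h2]
    -- 1-u = (1+u)(1+2b₀)
    have e4 : 1 - u = (1+u) * (1+2*b₀) := by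
      apply huu.mul_left_cancel
      calc (1+u)*(1-u) = 1 - ξ^t := by linear_combination -husq
      _ = ξ^(j₀) * (1+2*b₀) := hrep
      _ = (1+u)^2 * (1+2*b₀) := by rw [hA]
      _ = (1+u)*((1+u)*(1+2*b₀)) := by ring
    have h5 : 2*u + 2*b₀*(1+u) = 0 := by linear_combination -e4
    have h2uw : 2*u = 2*w := by
      rw [hwrep, ← hux]
      linear_combination (-(u*e)) * (four0 (R := R))
    have h2X : 2*(u + b + u*b) = 0 := by
      linear_combination (1+b)*h2uw + 2*hwb + b*(four0 (R := R))
    have s1 : 2*b₀*(1+u)*(1+b) = 2*b₀ := by linear_combination b₀*h2X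
    have s2 : 2*u*(1+b) = 2*b := by linear_combination (1+b)*h2uw + 2*hwb
    have s3 : 2*b + 2*b₀ = 0 := by linear_combination (1+b)*h5 - s1 - s2
    have s4 : 2*b₀ = 2*b := by linear_combination s3 - b*(four0 (R := R))
    have hfinal : 1 - ξ^t = ξ^(j₀) * (1+2*b) := by
      rw [hrep]; linear_combination (ξ^(j₀)) * s4
    refine ⟨t+1, by omega, j₀*(2^r-1-1)+j, ?_⟩
    have hif : (if t+1 = 0 then (1:R) else if t+1 = 1 then -1 else (1 - ξ^(t+1-1)))
        = 1 - ξ^t := by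
      rw [if_neg (by omega), if_neg (by omega)]
      norm_num
    rw [hif, hfinal, hzrep]
    have hpow : ξ^(j₀) * ξ^(j₀*(2^r-1-1)+j) = ξ^j := by
      rw [← pow_add]
      have hexp : j₀ + (j₀*(2^r-1-1)+j) = (2^r-1)*j₀ + j := by
        obtain ⟨mm, hmm⟩ : ∃ mm, 2^r - 1 = mm+1 := ⟨2^r-1-1, by omega⟩
        rw [hmm, Nat.add_sub_cancel]; ring
      rw [hexp, pow_add, pow_mul, xi_pow_n r ξ hξ, one_pow, one_mul]
    calc ξ^j * (1+2*b) = (ξ^(j₀) * ξ^(j₀*(2^r-1-1)+j)) * (1+2*b) := by rw [hpow]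
    _ = ξ^(j₀) * (1+2*b) * ξ^(j₀*(2^r-1-1)+j) := by ring

lemma base_pow_inj (r : ℕ) (hr : 1 ≤ r)
    (hlocal : ∀ x : R, ¬ IsUnit x ↔ x ∈ Ideal.span {(2 : R)})
    (ξ : R) (hξ : orderOf ξ = 2 ^ r - 1) {t₁ t₂ : ℕ} (h1 : t₁ < 2^r) (h2 : t₂ < 2^r)
    (hE : (if t₁=0 then (1:R) else if t₁=1 then -1 else (1-ξ^(t₁-1)))^(2^r-1)
        = (if t₂=0 then (1:R) else if t₂=1 then -1 else (1-ξ^(t₂-1)))^(2^r-1)) :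
    t₁ = t₂ := by
  have hodd := n_odd r hr
  have hn := n_pos r hr
  have hneg : (-1:R)^(2^r-1) = -1 := Odd.neg_one_pow hodd
  have hmm : ∀ t, 2 ≤ t → t < 2^r → (1 ≤ t - 1 ∧ t - 1 ≤ 2^r - 2) := by
    intro t a bb; omega
  split_ifs at hE with a b c d e f g
  · omega
  · rw [one_pow, hneg] at hE
    exact absurd (by linear_combination hE : (2:R) = 0) two_ne
  · rw [one_pow] at hE
    obtain ⟨u1, u2⟩ := hmm t₂ (by omega) h2
    exact absurd hE.symm (psi_ne_one r hr hlocal ξ hξ u1 u2)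
  · rw [one_pow, hneg] at hE
    exact absurd (by linear_combination -hE : (2:R) = 0) two_ne
  · omega
  · rw [hneg] at hE
    obtain ⟨u1, u2⟩ := hmm t₂ (by omega) h2
    exact absurd hE.symm (psi_ne_negone r hr hlocal ξ hξ u1 u2)
  · rw [one_pow] at hE
    obtain ⟨u1, u2⟩ := hmm t₁ (by omega) h1
    exact absurd hE (psi_ne_one r hr hlocal ξ hξ u1 u2)
  · rw [hneg] at hE
    obtain ⟨u1, u2⟩ := hmm t₁ (by omega) h1
    exact absurd hE (psi_ne_negone r hr hlocal ξ hξ u1 u2)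
  · obtain ⟨u1, u2⟩ := hmm t₁ (by omega) h1
    obtain ⟨v1, v2⟩ := hmm t₂ (by omega) h2
    have := psi_inj r hr hlocal ξ hξ u1 u2 v1 v2 hE
    omega

end S19

open S19

/-- In `R = GR(4, 4^r)` with `ξ` of multiplicative order `2^r - 1` and `G₁ = ⟨ξ⟩`, for every
unit `γ` the `2^r` cosets `γG₁, -γG₁, (1-ξ)γG₁, (1-ξ²)γG₁, …, (1-ξ^{2^r-2})γG₁` are pairwise
disjoint and partition the unit group `R^*`; moreover `R \ R^* = 2γG₁ ∪ {0}`. -/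
theorem stmt19 (r : ℕ) (hr : 1 ≤ r)
    (R : Type) [CommRing R] [Fintype R] [CharP R 4]
    (hcard : Fintype.card R = 4 ^ r)
    (hlocal : ∀ x : R, ¬ IsUnit x ↔ x ∈ Ideal.span {(2 : R)})
    (ξ : R) (hξ : orderOf ξ = 2 ^ r - 1) :
    (∀ t₁ ∈ Finset.range (2 ^ r), ∀ t₂ ∈ Finset.range (2 ^ r), t₁ ≠ t₂ → ∀ γ : R, IsUnit γ →
      Disjoint
        ((if t₁ = 0 then γ else if t₁ = 1 then -γ else (1 - ξ ^ (t₁ - 1)) * γ) •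
          (Set.range fun k : ℕ => ξ ^ k))
        ((if t₂ = 0 then γ else if t₂ = 1 then -γ else (1 - ξ ^ (t₂ - 1)) * γ) •
          (Set.range fun k : ℕ => ξ ^ k))) ∧
    (∀ γ : R, IsUnit γ →
      (⋃ t ∈ Finset.range (2 ^ r),
          (if t = 0 then γ else if t = 1 then -γ else (1 - ξ ^ (t - 1)) * γ) •
            (Set.range fun k : ℕ => ξ ^ k))
        = {x : R | IsUnit x}) ∧
    (∀ γ : R, IsUnit γ →
      {x : R | ¬ IsUnit x} = (2 * γ) • (Set.range fun k : ℕ => ξ ^ k) ∪ {0}) := by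
  have hu := xi_unit r hr ξ hξ
  have hn := n_pos r hr
  have hknil : ∀ k : ℕ, (ξ^k)^(2^r-1) = 1 := by
    intro k; rw [← pow_mul, mul_comm, pow_mul, xi_pow_n r ξ hξ, one_pow]
  have hcoeff : ∀ (γ : R) (t : ℕ),
      (if t = 0 then γ else if t = 1 then -γ else (1-ξ^(t-1)) * γ)
      = (if t = 0 then (1:R) else if t = 1 then -1 else (1-ξ^(t-1))) * γ := by
    intro γ t; split_ifs <;> ring
  refine ⟨?_, ?_, ?_⟩
  · -- disjointness
    intro t₁ ht₁ t₂ ht₂ hne γ hγ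
    rw [Finset.mem_range] at ht₁ ht₂
    rw [Set.disjoint_left]
    rintro x hx1 hx2
    rw [Set.mem_smul_set] at hx1 hx2
    obtain ⟨y1, ⟨k1, rfl⟩, hxy1⟩ := hx1
    obtain ⟨y2, ⟨k2, rfl⟩, hxy2⟩ := hx2
    rw [smul_eq_mul] at hxy1 hxy2
    have e : (if t₁ = 0 then γ else if t₁ = 1 then -γ else (1-ξ^(t₁-1)) * γ) * ξ^k1
           = (if t₂ = 0 then γ else if t₂ = 1 then -γ else (1-ξ^(t₂-1)) * γ) * ξ^k2 := by
      rw [hxy1, hxy2]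
    rw [hcoeff γ t₁, hcoeff γ t₂] at e
    have epow := congrArg (fun z : R => z^(2^r-1)) e
    simp only [mul_pow, hknil] at epow
    have e2 : γ^(2^r-1) * ((if t₁ = 0 then (1:R) else if t₁ = 1 then -1 else (1-ξ^(t₁-1)))^(2^r-1))
            = γ^(2^r-1) * ((if t₂ = 0 then (1:R) else if t₂ = 1 then -1 else (1-ξ^(t₂-1)))^(2^r-1)) := by
      linear_combination epow
    exact hne (base_pow_inj r hr hlocal ξ hξ ht₁ ht₂ ((hγ.pow _).mul_left_cancel e2))
  · -- union
    intro γ hγ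
    ext x
    simp only [Set.mem_iUnion, Set.mem_setOf_eq, Finset.mem_range]
    constructor
    · rintro ⟨t, ht, hx⟩
      rw [Set.mem_smul_set] at hx
      obtain ⟨y, ⟨k, rfl⟩, hxy⟩ := hx
      rw [smul_eq_mul] at hxy
      rw [← hxy, hcoeff γ t]
      refine (((?_ : IsUnit _).mul hγ).mul (hu.pow k))
      split_ifs with a b
      · exact isUnit_one
      · exact isUnit_one.neg
      · refine unit_one_sub r hr hlocal ξ hξ ?_
        intro hdvd
        have := Nat.le_of_dvd (by omega) hdvd
        omega
    · intro hx
      obtain ⟨γu, hγu⟩ := hγ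
      have hz : IsUnit (x * ↑γu⁻¹) := hx.mul (Units.isUnit _)
      obtain ⟨t, ht, k, hzk⟩ := cover r hr hcard hlocal ξ hξ _ hz
      refine ⟨t, ht, ?_⟩
      rw [Set.mem_smul_set]
      refine ⟨ξ^k, ⟨k, rfl⟩, ?_⟩
      rw [smul_eq_mul, hcoeff γ t]
      have : x = (x * ↑γu⁻¹) * γ := by
        rw [← hγu, mul_assoc, Units.inv_mul, mul_one]
      rw [this, hzk]; ring
  · -- nonunits
    intro γ hγ
    have hnt : Nontrivial R := ⟨⟨2, 0, two_ne⟩⟩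
    ext x
    simp only [Set.mem_setOf_eq, Set.mem_union, Set.mem_singleton_iff]
    constructor
    · intro hx
      rcases Ideal.mem_span_singleton.mp ((hlocal x).mp hx) with ⟨c, rfl⟩
      by_cases h0 : 2*c = 0
      · right; exact h0
      · left
        have hcu : IsUnit c := by
          by_contra hxx; exact h0 ((ann hlocal c).mpr hxx)
        obtain ⟨γu, hγu⟩ := hγ
        have hz : IsUnit (c * ↑γu⁻¹) := hcu.mul (Units.isUnit _)
        obtain ⟨j, b, hrep⟩ := exists_rep r hr hcard hlocal ξ hξ _ hz
        rw [Set.mem_smul_set]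
        refine ⟨ξ^j, ⟨j, rfl⟩, ?_⟩
        rw [smul_eq_mul]
        have hc : c = γ * ξ^j * (1+2*b) := by
          have : c = (c * ↑γu⁻¹) * γ := by rw [← hγu, mul_assoc, Units.inv_mul, mul_one]
          rw [this, hrep]; ring
        rw [hc]
        linear_combination (-(γ*ξ^j*b)) * (four0 (R := R))
    · rintro (hx | rfl)
      · rw [Set.mem_smul_set] at hx
        obtain ⟨y, ⟨k, rfl⟩, hxy⟩ := hx
        rw [smul_eq_mul] at hxy
        apply (ann hlocal x).mp
        rw [← hxy]
        linear_combination (γ*ξ^k) * (four0 (R := R))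
      · exact not_isUnit_zero
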